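/- Let q ≥ 1, m ≥ 2, and let f_1, …, f_m ∈ ℂ^q satisfy Σ_{j=1}^m f_j f_j* = I_q (a Parseval frame) and ‖f_j‖² = q/m for every j. Then max_{i ≠ j} |⟨f_i, f_j⟩|² ≥ q(m−q)/(m²(m−1)), and equality holds if and only if |⟨f_i, f_j⟩| = √(q(m−q)/(m²(m−1))) for all i ≠ j. -/

import Mathlib

open Matrix

/-- Welch bound for an equal-norm Parseval frame `{f_j}` for `ℂ^q`:
the maximum over pairs `i ≠ j` of `|⟨f_i, f_j⟩|²` is at least `q(m−q)/(m²(m−1))`, with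
equality iff all the pairwise absolute inner products coincide with
`√(q(m−q)/(m²(m−1)))`.  (The maximum being `≥ c` is the first conjunct; the maximum
being `= c` is expressed as all pairs being `≤ c`.) -/
theorem stmt_16 (q m : ℕ) (hq : 1 ≤ q) (hm : 2 ≤ m)
    (f : Fin m → Fin q → ℂ)
    (hParseval : ∑ j, Matrix.vecMulVec (f j) (star (f j)) = 1)
    (hnorm : ∀ j, star (f j) ⬝ᵥ f j = ((q : ℂ) / m)) :
    (∃ i j : Fin m, i ≠ j ∧
        (q : ℝ) * ((m : ℝ) - q) / ((m : ℝ) ^ 2 * ((m : ℝ) - 1)) ≤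
          ‖star (f i) ⬝ᵥ f j‖ ^ 2) ∧
    ((∀ i j : Fin m, i ≠ j →
        ‖star (f i) ⬝ᵥ f j‖ ^ 2 ≤
          (q : ℝ) * ((m : ℝ) - q) / ((m : ℝ) ^ 2 * ((m : ℝ) - 1))) ↔
      (∀ i j : Fin m, i ≠ j →
        ‖star (f i) ⬝ᵥ f j‖ =
          Real.sqrt ((q : ℝ) * ((m : ℝ) - q) / ((m : ℝ) ^ 2 * ((m : ℝ) - 1))))) := by
  classical
  have hmR : (2:ℝ) ≤ (m:ℝ) := by exact_mod_cast hm
  have hqR : (1:ℝ) ≤ (q:ℝ) := by exact_mod_cast hq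
  have hm0 : (0:ℝ) < m := by linarith
  set A : Matrix (Fin q) (Fin m) ℂ := Matrix.of (fun k j => f j k) with hA
  have hAAH : A * Aᴴ = 1 := by
    ext k l
    have h := congrFun (congrFun hParseval k) l
    simpa [Matrix.sum_apply, Matrix.vecMulVec_apply, Matrix.mul_apply, hA,
      Matrix.conjTranspose_apply] using h
  have hG : (Aᴴ * A) = Matrix.of (fun i j => star (f i) ⬝ᵥ f j) := by
    ext i j
    simp [Matrix.mul_apply, dotProduct, hA, Matrix.conjTranspose_apply, mul_comm]
  have htrC : ∑ i, ∑ j, (star (f i) ⬝ᵥ f j) * (star (f j) ⬝ᵥ f i) = (q:ℂ) := by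
    have : ∑ i, ∑ j, (star (f i) ⬝ᵥ f j) * (star (f j) ⬝ᵥ f i)
        = Matrix.trace ((Aᴴ * A) * (Aᴴ * A)) := by
      simp [Matrix.trace, Matrix.diag, Matrix.mul_apply, hG]
    rw [this, Matrix.mul_assoc, ← Matrix.mul_assoc A, hAAH, Matrix.one_mul,
      Matrix.trace_mul_comm, hAAH, Matrix.trace_one]
    simp
  have hstar : ∀ i j, star (f j) ⬝ᵥ f i = star (star (f i) ⬝ᵥ f j) := by
    intro i j
    simp [dotProduct, mul_comm]
  have hsumR : ∑ i, ∑ j, (‖star (f i) ⬝ᵥ f j‖) ^ 2 = (q:ℝ) := by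
    have : ((∑ i, ∑ j, (‖star (f i) ⬝ᵥ f j‖) ^ 2 : ℝ) : ℂ) = (q:ℂ) := by
      rw [← htrC]
      push_cast
      refine Finset.sum_congr rfl fun i _ => Finset.sum_congr rfl fun j _ => ?_
      rw [hstar i j, Complex.star_def, Complex.mul_conj, ← Complex.sq_norm]
      push_cast
      ring
    exact_mod_cast this
  -- split diagonal and off-diagonal
  set g : Fin m × Fin m → ℝ := fun p => (‖star (f p.1) ⬝ᵥ f p.2‖) ^ 2 with hg
  have hdiag : ∀ i : Fin m, g (i, i) = ((q:ℝ)/m) ^ 2 := by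
    intro i
    have : ‖star (f i) ⬝ᵥ f i‖ = (q:ℝ)/m := by
      rw [hnorm i]
      rw [norm_div]
      simp
    simp [hg, this]
  have hsplit : ∑ p ∈ (Finset.univ : Finset (Fin m)).offDiag, g p
      = (q:ℝ) - m * ((q:ℝ)/m)^2 := by
    have h1 : ∑ p ∈ (Finset.univ ×ˢ Finset.univ : Finset (Fin m × Fin m)), g p = (q:ℝ) := by
      rw [Finset.sum_product]; exact hsumR
    have h2 : ∑ p ∈ (Finset.univ : Finset (Fin m)).diag, g p = m * ((q:ℝ)/m)^2 := by
      rw [Finset.sum_diag]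
      simp [hdiag, Finset.sum_const, mul_comm]
    have h3 := Finset.diag_union_offDiag (Finset.univ : Finset (Fin m))
    have h4 := Finset.disjoint_diag_offDiag (Finset.univ : Finset (Fin m))
    rw [← h3, Finset.sum_union h4, h2] at h1
    linarith
  have hcardN : (Finset.univ : Finset (Fin m)).offDiag.card = m * (m - 1) := by
    rw [Finset.offDiag_card, Finset.card_univ, Fintype.card_fin, Nat.mul_sub_one]
  have hcard : ((Finset.univ : Finset (Fin m)).offDiag.card : ℝ) = m * ((m:ℝ) - 1) := by
    rw [hcardN]
    push_cast [Nat.cast_sub (by omega : 1 ≤ m)]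
    ring
  set c : ℝ := (q : ℝ) * ((m : ℝ) - q) / ((m : ℝ) ^ 2 * ((m : ℝ) - 1)) with hc
  -- m ≥ q
  have hoffnonneg : (0:ℝ) ≤ ∑ p ∈ (Finset.univ : Finset (Fin m)).offDiag, g p :=
    Finset.sum_nonneg fun p _ => by positivity
  have hmne : (m:ℝ) ≠ 0 := ne_of_gt hm0
  have hm1 : (m:ℝ) - 1 ≠ 0 := by intro h; linarith [hmR]
  have hqm : (q:ℝ) ≤ m := by
    have h := hoffnonneg
    rw [hsplit] at h
    have hid : (m:ℝ) * ((q:ℝ)/m)^2 = (q:ℝ)^2/m := by field_simp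
    rw [hid, sub_nonneg, div_le_iff₀ hm0] at h
    nlinarith
  have hc0 : 0 ≤ c := by
    rw [hc]
    apply div_nonneg
    · nlinarith
    · nlinarith
  have hsumc : ∑ p ∈ (Finset.univ : Finset (Fin m)).offDiag, g p
      = ∑ _p ∈ (Finset.univ : Finset (Fin m)).offDiag, c := by
    rw [hsplit, Finset.sum_const, nsmul_eq_mul, hcard, hc]
    field_simp
  have hne : ((Finset.univ : Finset (Fin m)).offDiag).Nonempty := by
    refine ⟨((⟨0, by omega⟩ : Fin m), (⟨1, by omega⟩ : Fin m)), ?_⟩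
    rw [Finset.mem_offDiag]
    exact ⟨Finset.mem_univ _, Finset.mem_univ _, by simp [Fin.ext_iff]⟩
  constructor
  · obtain ⟨p, hp, hle⟩ := Finset.exists_le_of_sum_le hne (le_of_eq hsumc.symm)
    rw [Finset.mem_offDiag] at hp
    exact ⟨p.1, p.2, hp.2.2, hle⟩
  · constructor
    · intro hall i j hij
      have heq := (Finset.sum_eq_sum_iff_of_le
        (fun p hp => by
          rw [Finset.mem_offDiag] at hp
          exact hall p.1 p.2 hp.2.2)).mp hsumc (i, j)
        (by rw [Finset.mem_offDiag]; exact ⟨Finset.mem_univ _, Finset.mem_univ _, hij⟩)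
      have : ‖star (f i) ⬝ᵥ f j‖ ^ 2 = c := heq
      rw [← this, Real.sqrt_sq (norm_nonneg _)]
    · intro hall i j hij
      rw [hall i j hij, Real.sq_sqrt hc0]
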